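/- Let l ≥ 2, let λ be an l-core partition, let p = nl + r with n ∈ ℤ and 0 ≤ r ≤ l−1, and let tilde p_0, …, tilde p_{l−1} be the charges of the sequences k ↦ μ_λ(lk + i − p) for 0 ≤ i ≤ l−1 (the quotient charges of the Maya diagram of λ shifted by p). Then ∑_{k∈ℤ} N_{kl−r}(λ) = (1/l)·( (l/2)·∑_{i=0}^{l−1} tilde p_i² − (l+1)p/2 − p²/2 + (l+1)ln/2 + (r+1)r/2 ). -/

import Mathlib

/-- A partition `λ = (λ_1 ≥ λ_2 ≥ ⋯)`: a non-increasing sequence of natural numbers with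
finitely many nonzero terms.  Here `parts n` denotes `λ_{n+1}`. -/
structure Partition' where
  parts : ℕ → ℕ
  antitone : ∀ ⦃m n : ℕ⦄, m ≤ n → parts n ≤ parts m
  eventually_zero : ∃ N : ℕ, ∀ n ≥ N, parts n = 0

namespace Partition'

/-- `|λ|`, the number of boxes of the Young diagram of `λ`. -/
noncomputable def size (lam : Partition') : ℕ := ∑ᶠ n, lam.parts n

/-- The Young diagram of `λ`: boxes `(m, n)` (column `m`, row `n`) with `m < λ_{n+1}`. -/
def cells (lam : Partition') : Set (ℕ × ℕ) := {c | c.1 < lam.parts c.2}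

/-- Maya diagram of `λ`: `maya lam k` holds (bead value 1) iff `k ∉ {λ_m − m : m ≥ 1}`. -/
def maya (lam : Partition') (k : ℤ) : Prop :=
  ¬ ∃ m : ℕ, k = (lam.parts m : ℤ) - ((m : ℤ) + 1)

/-- The conjugate partition's `(m+1)`-st part: `λ'_{m+1} = #{rows of length > m}`. -/
noncomputable def conjParts (lam : Partition') (m : ℕ) : ℕ :=
  {j : ℕ | m < lam.parts j}.ncard

/-- Hook length of the box `(m, n)`: `(λ_{n+1} − 1 − m) + (λ'_{m+1} − 1 − n) + 1`. -/
noncomputable def hookLength (lam : Partition') (m n : ℕ) : ℕ :=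
  (lam.parts n - 1 - m) + (lam.conjParts m - 1 - n) + 1

end Partition'

/-- `c` is the charge of the 0/1-sequence `μ`:
`#{k < c : μ k = 1} = #{k ≥ c : μ k = 0}` (both sets finite). -/
def IsCharge (μ : ℤ → Prop) (c : ℤ) : Prop :=
  {k : ℤ | k < c ∧ μ k}.Finite ∧ {k : ℤ | c ≤ k ∧ ¬ μ k}.Finite ∧
    {k : ℤ | k < c ∧ μ k}.ncard = {k : ℤ | c ≤ k ∧ ¬ μ k}.ncard

/-- The `i`-th quotient sequence of the Maya diagram of `λ`: `μ_i(k) = μ_λ(l·k + i)`. -/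
def quotSeq (l : ℕ) (lam : Partition') (i : ℕ) : ℤ → Prop :=
  fun k => lam.maya ((l : ℤ) * k + (i : ℕ))

/-- `Q` is the `l`-quotient of `λ` with quotient charges `p`: for each `i`, `p i` is the
charge of the `i`-th quotient sequence `μ_i` and `μ_{Q i}(k) = μ_i(k + p i)`. -/
def IsQuotientWith (l : ℕ) (lam : Partition') (p : Fin l → ℤ) (Q : Fin l → Partition') : Prop :=
  ∀ i : Fin l, IsCharge (quotSeq l lam i) (p i) ∧
    ∀ k : ℤ, (Q i).maya k ↔ quotSeq l lam i (k + p i)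

/-- Two boxes are adjacent if they share an edge. -/
def Adj (a b : ℕ × ℕ) : Prop :=
  (a.1 = b.1 ∧ (a.2 = b.2 + 1 ∨ b.2 = a.2 + 1)) ∨
    (a.2 = b.2 ∧ (a.1 = b.1 + 1 ∨ b.1 = a.1 + 1))

/-- A set of boxes is connected: any two of its boxes are joined by a path of
edge-adjacent boxes inside the set. -/
def ConnectedIn (H : Set (ℕ × ℕ)) : Prop :=
  ∀ x ∈ H, ∀ y ∈ H,
    Relation.ReflTransGen (fun a b => a ∈ H ∧ b ∈ H ∧ Adj a b) x y

/-- `H` contains a 2×2 square of boxes. -/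
def HasSquare (H : Set (ℕ × ℕ)) : Prop :=
  ∃ m n : ℕ, (m, n) ∈ H ∧ (m + 1, n) ∈ H ∧ (m, n + 1) ∈ H ∧ (m + 1, n + 1) ∈ H

/-- `H` is a rim hook of length `l` of `λ`: a connected set of `l` boxes of `λ`,
containing no 2×2 square, whose removal leaves the Young diagram of a partition. -/
def IsRimHook (l : ℕ) (lam : Partition') (H : Set (ℕ × ℕ)) : Prop :=
  H ⊆ lam.cells ∧ H.Finite ∧ H.ncard = l ∧ ConnectedIn H ∧ ¬ HasSquare H ∧
    ∃ mu : Partition', mu.cells = lam.cells \ H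

/-- `μ` is obtained from `λ` by removing one rim hook of length `l`. -/
def RemoveHook (l : ℕ) (lam mu : Partition') : Prop :=
  ∃ H : Set (ℕ × ℕ), IsRimHook l lam H ∧ mu.cells = lam.cells \ H

/-- `λ` is an `l`-core: it admits no rim hook of length `l`. -/
def IsLCore (l : ℕ) (lam : Partition') : Prop := ¬ ∃ H : Set (ℕ × ℕ), IsRimHook l lam H

/-- `c` is the `l`-core of `λ`: obtained from `λ` by repeatedly removing rim hooks of
length `l` until none remain. -/
def IsCoreOf (l : ℕ) (lam c : Partition') : Prop :=
  Relation.ReflTransGen (RemoveHook l) lam c ∧ IsLCore l c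

/-- Number of boxes `(m,n)` of `λ` with content `m − n ≡ r (mod l)`. -/
noncomputable def contentCount (l : ℕ) (lam : Partition') (r : ℤ) : ℕ :=
  {c : ℕ × ℕ | c ∈ lam.cells ∧ ((c.1 : ℤ) - (c.2 : ℤ)) ≡ r [ZMOD (l : ℤ)]}.ncard

/-- `N_d(λ)`: the number of boxes `(m,n)` of `λ` with content `m − n = d`. -/
noncomputable def diagCount (lam : Partition') (d : ℤ) : ℕ :=
  {c : ℕ × ℕ | c ∈ lam.cells ∧ ((c.1 : ℤ) - (c.2 : ℤ)) = d}.ncard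

/-- `K` is the blended partition of the charges `p` and the `l`-tuple of partitions `R`:
`{p + K_m − m : m ≥ 1} = {l·(R_{i,m} − m + p_i) + i : 0 ≤ i ≤ l−1, m ≥ 1}` in `ℤ`. -/
def IsBlended (l : ℕ) (p : Fin l → ℤ) (R : Fin l → Partition') (K : Partition') : Prop :=
  {k : ℤ | ∃ m : ℕ, k = (∑ i, p i) + (K.parts m : ℤ) - ((m : ℤ) + 1)} =
    {k : ℤ | ∃ i : Fin l, ∃ m : ℕ,
      k = (l : ℤ) * (((R i).parts m : ℤ) - ((m : ℤ) + 1) + p i) + (i : ℕ)}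
set_option linter.unusedSectionVars false
set_option linter.unusedVariables false
set_option maxHeartbeats 1000000
namespace S8

open Partition'

open Partition'

def beta (lam : Partition') (b : ℕ) : ℤ := (lam.parts b : ℤ) - ((b : ℤ) + 1)

lemma beta_strictAnti (lam : Partition') : StrictAnti (beta lam) := by
  intro a b hab
  have := lam.antitone hab.le
  unfold beta
  omega

lemma beta_add_le (lam : Partition') (b : ℕ) : beta lam b + b ≤ beta lam 0 := by
  induction b with
  | zero => simp
  | succ b ih =>
    have h2 := beta_strictAnti lam (Nat.lt_succ_self b)
    rw [Nat.succ_eq_add_one] at h2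
    push_cast
    omega

lemma not_maya_iff (lam : Partition') (k : ℤ) : ¬ lam.maya k ↔ ∃ b, beta lam b = k := by
  unfold maya beta
  push_neg
  simp [eq_comm]

lemma cells_iff (lam : Partition') (a b : ℕ) :
    (a, b) ∈ lam.cells ↔ (a : ℤ) - b ≤ beta lam b := by
  unfold cells beta
  simp only [Set.mem_setOf_eq]
  omega

lemma cells_mono (lam : Partition') {a b a' b' : ℕ} (h : (a, b) ∈ lam.cells)
    (ha : a' ≤ a) (hb : b' ≤ b) : (a', b') ∈ lam.cells := by
  have := lam.antitone hb
  unfold cells at *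
  simp only [Set.mem_setOf_eq] at *
  omega

lemma nat_downclosed_eq_Iio {S : Set ℕ} (hf : S.Finite)
    (hdc : ∀ a b : ℕ, a ≤ b → b ∈ S → a ∈ S) : S = Set.Iio S.ncard := by
  have hc : Sᶜ.Nonempty := by
    by_contra h
    rw [Set.not_nonempty_iff_eq_empty, Set.compl_empty_iff] at h
    exact (Set.infinite_univ (α := ℕ)) (h ▸ hf)
  have hS : S = Set.Iio (sInf Sᶜ) := by
    ext a
    simp only [Set.mem_Iio]
    constructor
    · intro ha
      by_contra h
      push_neg at h
      exact Nat.sInf_mem hc (hdc _ _ h ha)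
    · intro ha
      by_contra h
      have : a ∈ Sᶜ := h
      exact absurd (Nat.sInf_le this) (by omega)
  have hIio : ∀ m : ℕ, (Set.Iio m).ncard = m := fun m => by
    rw [← Finset.coe_range, Set.ncard_coe_finset, Finset.card_range]
  have hn : S.ncard = sInf Sᶜ := by
    conv_lhs => rw [hS]
    exact hIio _
  rw [hn, ← hS]

noncomputable def Fc (lam : Partition') (d : ℤ) : ℕ := {k : ℤ | d ≤ k ∧ ¬ lam.maya k}.ncard

lemma betaSet_finite (lam : Partition') (d : ℤ) : {b : ℕ | d ≤ beta lam b}.Finite := by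
  apply Set.Finite.subset (Set.finite_Iio ((beta lam 0 - d).toNat + 1))
  intro b hb
  simp only [Set.mem_setOf_eq] at hb
  have := beta_add_le lam b
  simp only [Set.mem_Iio]
  omega

lemma Fc_set_eq (lam : Partition') (d : ℤ) :
    {k : ℤ | d ≤ k ∧ ¬ lam.maya k} = beta lam '' {b : ℕ | d ≤ beta lam b} := by
  ext k
  simp only [Set.mem_setOf_eq, Set.mem_image, not_maya_iff]
  constructor
  · rintro ⟨hd, b, rfl⟩; exact ⟨b, hd, rfl⟩
  · rintro ⟨b, hd, rfl⟩; exact ⟨hd, b, rfl⟩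

lemma Fc_eq_card (lam : Partition') (d : ℤ) : Fc lam d = {b : ℕ | d ≤ beta lam b}.ncard := by
  rw [Fc, Fc_set_eq, Set.ncard_image_of_injective _ (beta_strictAnti lam).injective]

lemma betaSet_eq_Iio (lam : Partition') (d : ℤ) :
    {b : ℕ | d ≤ beta lam b} = Set.Iio (Fc lam d) := by
  rw [Fc_eq_card]
  exact nat_downclosed_eq_Iio (betaSet_finite lam d)
    (fun a b hab hb => le_trans hb ((beta_strictAnti lam).antitone hab))

lemma lt_Fc_iff (lam : Partition') {b : ℕ} {d : ℤ} : b < Fc lam d ↔ d ≤ beta lam b := by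
  have h := Set.ext_iff.mp (betaSet_eq_Iio lam d) b
  simp only [Set.mem_setOf_eq, Set.mem_Iio] at h
  exact h.symm

lemma cells_iff_Fc (lam : Partition') (a b : ℕ) :
    (a, b) ∈ lam.cells ↔ b < Fc lam ((a : ℤ) - b) := by
  rw [cells_iff, lt_Fc_iff]

lemma Fc_finite (lam : Partition') (d : ℤ) : {k : ℤ | d ≤ k ∧ ¬ lam.maya k}.Finite := by
  rw [Fc_set_eq]; exact (betaSet_finite lam d).image _



lemma adj_symm {c c' : ℕ × ℕ} (h : Adj c c') : Adj c' c := by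
  unfold Adj at *; tauto

section Part1

variable (lam : Partition') (x y : ℤ)

/-- The candidate rim hook: rim boxes with content in `(x, y]`. -/
def Hset : Set (ℕ × ℕ) :=
  {c | c ∈ lam.cells ∧ (c.1 + 1, c.2 + 1) ∉ lam.cells ∧
    x < (c.1 : ℤ) - c.2 ∧ (c.1 : ℤ) - c.2 ≤ y}

variable {lam x y}
variable (hy : ¬ lam.maya y) (hx : lam.maya x) (hxy : x < y)

include hy hx hxy

lemma diag_nonempty {d : ℤ} (hd1 : x < d) (hd2 : d ≤ y) :
    ∃ c : ℕ × ℕ, c ∈ lam.cells ∧ (c.1 : ℤ) - c.2 = d := by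
  rcases le_or_gt 0 d with hd0 | hd0
  · obtain ⟨b0, hb0⟩ := (not_maya_iff lam y).mp hy
    refine ⟨(b0 + d.toNat, b0), ?_, by push_cast; omega⟩
    rw [cells_iff]
    push_cast
    omega
  · set b : ℕ := (-d).toNat with hb
    have hparts : 1 ≤ lam.parts b := by
      by_contra hp
      push_neg at hp
      have hx' : ¬ lam.maya x := by
        rw [not_maya_iff]
        refine ⟨(-x - 1).toNat, ?_⟩
        have h0 : lam.parts ((-x - 1).toNat) = 0 := by
          have : lam.parts ((-x - 1).toNat) ≤ lam.parts b := lam.antitone (by omega)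
          omega
        rw [beta, h0]
        push_cast
        omega
      exact hx' hx
    refine ⟨(0, b), ?_, by push_cast; omega⟩
    simp only [cells, Set.mem_setOf_eq]
    omega

lemma diag_finite (d : ℤ) : {c : ℕ × ℕ | c ∈ lam.cells ∧ (c.1 : ℤ) - c.2 = d}.Finite := by
  apply Set.Finite.subset ((Set.finite_Iio (lam.parts 0)).prod
    (Set.finite_Iio (lam.parts 0 + d.natAbs)))
  rintro ⟨a, b⟩ ⟨hc, hd⟩
  have h1 : a < lam.parts b := hc
  have h2 := lam.antitone (Nat.zero_le b)
  constructor <;> · simp only [Set.mem_Iio]; simp at hd ⊢; omega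

lemma rim_exists {d : ℤ} (hd1 : x < d) (hd2 : d ≤ y) :
    ∃ c, c ∈ Hset lam x y ∧ (c.1 : ℤ) - c.2 = d := by
  have hne := diag_nonempty hy hx hxy hd1 hd2
  have hfin := diag_finite hy hx hxy (lam := lam) d
  -- pick element with maximal first coordinate
  obtain ⟨c, hc, hmax⟩ := Set.Finite.exists_maximalFor (fun c : ℕ × ℕ => c.1)
    _ hfin hne
  obtain ⟨hcc, hcd⟩ := hc
  refine ⟨c, ⟨hcc, ?_, by omega, by omega⟩, hcd⟩
  intro hcell
  have h2 : (((c.1 + 1 : ℕ) : ℤ)) - ((c.2 + 1 : ℕ) : ℤ) = d := by push_cast; omega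
  have h3 := hmax (j := (c.1 + 1, c.2 + 1)) ⟨hcell, h2⟩ (by simp)
  simp at h3

lemma rim_unique_aux {c c' : ℕ × ℕ} (h : c ∈ Hset lam x y) (h' : c' ∈ Hset lam x y)
    (hcont : (c.1 : ℤ) - c.2 = (c'.1 : ℤ) - c'.2) (hlt : c.1 < c'.1) : False := by
  obtain ⟨hc, hr, _, _⟩ := h
  obtain ⟨hc', _, _, _⟩ := h'
  have hb : c.2 < c'.2 := by omega
  have : (c.1 + 1, c.2 + 1) ∈ lam.cells := by
    have : ((c'.1, c'.2) : ℕ × ℕ) ∈ lam.cells := hc'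
    exact cells_mono lam this (by omega) (by omega)
  exact hr this

lemma rim_unique {c c' : ℕ × ℕ} (h : c ∈ Hset lam x y) (h' : c' ∈ Hset lam x y)
    (hcont : (c.1 : ℤ) - c.2 = (c'.1 : ℤ) - c'.2) : c = c' := by
  rcases lt_trichotomy c.1 c'.1 with hlt | heq | hgt
  · exact absurd (rim_unique_aux hy hx hxy h h' hcont hlt) not_false
  · have : c.2 = c'.2 := by omega
    exact Prod.ext heq this
  · exact absurd (rim_unique_aux hy hx hxy h' h hcont.symm hgt) not_false

/-- The key upper bound: if `(a', b) ∈ H` and `(a, b)` is a cell then `a − b ≤ y`. -/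
lemma tail_bound {a' a b : ℕ} (h' : (a', b) ∈ Hset lam x y) (h : (a, b) ∈ lam.cells) :
    (a : ℤ) - b ≤ y := by
  obtain ⟨hc', hr', hw1, hw2⟩ := h'
  have hbeta : beta lam b ≤ y := by
    by_contra hby
    push_neg at hby
    obtain ⟨bs, hbs⟩ := (not_maya_iff lam y).mp hy
    have hlt : b < bs := by
      by_contra hge
      push_neg at hge
      have := (beta_strictAnti lam).antitone hge
      omega
    have h1 : y ≤ beta lam (b + 1) := by
      have := (beta_strictAnti lam).antitone (show b + 1 ≤ bs by omega)
      omega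
    -- rim of (a',b): a' + 1 ≥ parts (b+1)
    have h2 : lam.parts (b + 1) ≤ a' + 1 := by
      by_contra hh
      push_neg at hh
      exact hr' (by simpa [cells, Set.mem_setOf_eq] using hh)
    simp only [beta] at h1
    omega
  rw [cells_iff] at h
  omega

lemma tailH {a' a b : ℕ} (h' : (a', b) ∈ Hset lam x y) (h : (a, b) ∈ lam.cells)
    (hle : a' ≤ a) : (a, b) ∈ Hset lam x y := by
  obtain ⟨hc', hr', hw1, hw2⟩ := h'
  refine ⟨h, ?_, by omega, tail_bound hy hx hxy ⟨hc', hr', hw1, hw2⟩ h⟩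
  intro hcell
  exact hr' (cells_mono lam hcell (by omega) le_rfl)

lemma rowdc {a' a b : ℕ} (h : (a, b) ∈ lam.cells \ Hset lam x y) (hle : a' ≤ a) :
    (a', b) ∈ lam.cells \ Hset lam x y := by
  refine ⟨cells_mono lam h.1 hle le_rfl, ?_⟩
  intro hH
  exact h.2 (tailH hy hx hxy hH h.1 hle)

lemma coldc {a b : ℕ} (h : (a, b + 1) ∈ lam.cells \ Hset lam x y) :
    (a, b) ∈ lam.cells \ Hset lam x y := by
  refine ⟨cells_mono lam h.1 le_rfl (by omega), ?_⟩
  rintro ⟨hc, hr, hw1, hw2⟩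
  rcases lt_or_ge (x + 1) ((a : ℤ) - b) with hd | hd
  · -- d ≥ x + 2 : (a, b+1) ∈ H, contradiction
    refine h.2 ⟨h.1, ?_, by push_cast; omega, by push_cast; omega⟩
    intro hcell
    exact hr (cells_mono lam hcell le_rfl (by omega))
  · -- d = x + 1
    have hd' : (a : ℤ) - b = x + 1 := by omega
    have h1 : (a : ℤ) - (b + 1) ≤ beta lam (b + 1) := by
      have := (cells_iff lam a (b + 1)).mp h.1
      push_cast at this ⊢
      omega
    have h2 : beta lam (b + 1) ≠ x := by
      intro hbx
      exact ((not_maya_iff lam x).mpr ⟨b + 1, hbx⟩) hx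
    have h3 : (a : ℤ) + 1 - (b + 1) ≤ beta lam (b + 1) := by omega
    exact hr ((cells_iff lam (a + 1) (b + 1)).mpr (by push_cast at h3 ⊢; omega))

/-- The new partition obtained by removing `Hset`. -/
noncomputable def muParts (b : ℕ) : ℕ := sInf {m : ℕ | (m, b) ∉ lam.cells \ Hset lam x y}

lemma muParts_nonempty (b : ℕ) : {m : ℕ | (m, b) ∉ lam.cells \ Hset lam x y}.Nonempty := by
  refine ⟨lam.parts b, ?_⟩
  simp only [Set.mem_setOf_eq, Set.mem_diff, cells, Set.mem_setOf_eq]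
  omega

lemma muParts_mem {a b : ℕ} :
    a < muParts (lam := lam) (x := x) (y := y) b ↔ (a, b) ∈ lam.cells \ Hset lam x y := by
  rw [muParts]
  constructor
  · intro h
    by_contra hmem
    exact absurd (Nat.sInf_le
      (show a ∈ {m : ℕ | (m, b) ∉ lam.cells \ Hset lam x y} from hmem)) (by omega)
  · intro h
    by_contra hlt
    push_neg at hlt
    have hmem := Nat.sInf_mem (muParts_nonempty hy hx hxy (lam := lam) (x := x) (y := y) b)
    simp only [Set.mem_setOf_eq] at hmem
    exact hmem (rowdc hy hx hxy h hlt)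

lemma muParts_antitone : ∀ ⦃m n : ℕ⦄, m ≤ n →
    muParts (lam := lam) (x := x) (y := y) n ≤ muParts (lam := lam) (x := x) (y := y) m := by
  have step : ∀ b : ℕ, muParts (lam := lam) (x := x) (y := y) (b + 1) ≤
      muParts (lam := lam) (x := x) (y := y) b := by
    intro b
    by_contra hlt
    push_neg at hlt
    have h1 : muParts (lam := lam) (x := x) (y := y) b <
        muParts (lam := lam) (x := x) (y := y) (b + 1) := hlt
    have := (muParts_mem hy hx hxy).mp h1
    have := coldc hy hx hxy this
    have := (muParts_mem hy hx hxy).mpr this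
    omega
  intro m n hmn
  induction n with
  | zero =>
    have h0 : m = 0 := by omega
    subst h0; exact le_rfl
  | succ n ih =>
    rcases Nat.lt_succ_iff_lt_or_eq.mp (Nat.lt_succ_of_le hmn) with h | h
    · exact le_trans (step n) (ih (by omega))
    · subst h; exact le_rfl

lemma muParts_eventually_zero : ∃ N : ℕ, ∀ b ≥ N,
    muParts (lam := lam) (x := x) (y := y) b = 0 := by
  obtain ⟨N, hN⟩ := lam.eventually_zero
  refine ⟨N, fun b hb => ?_⟩
  have h0 : (0, b) ∉ lam.cells \ Hset lam x y := by
    intro h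
    have : (0 : ℕ) < lam.parts b := h.1
    rw [hN b hb] at this
    omega
  have h1 : muParts (lam := lam) (x := x) (y := y) b ≤ 0 := by
    rw [muParts]
    exact Nat.sInf_le (show (0:ℕ) ∈ {m : ℕ | (m, b) ∉ lam.cells \ Hset lam x y} from h0)
  omega

noncomputable def muPartition : Partition' :=
  ⟨muParts (lam := lam) (x := x) (y := y), muParts_antitone hy hx hxy,
    muParts_eventually_zero hy hx hxy⟩

lemma muPartition_cells :
    (muPartition hy hx hxy).cells = lam.cells \ Hset lam x y := by
  ext ⟨a, b⟩
  simp only [cells, Set.mem_setOf_eq, muPartition]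
  exact muParts_mem hy hx hxy


lemma exists_rimbox_fun : ∃ φ : ℤ → ℕ × ℕ, ∀ d, x < d → d ≤ y →
    φ d ∈ Hset lam x y ∧ ((φ d).1 : ℤ) - (φ d).2 = d := by
  classical
  refine ⟨fun d => if h : x < d ∧ d ≤ y then
    Classical.choose (rim_exists hy hx hxy h.1 h.2) else (0, 0), ?_⟩
  intro d h1 h2
  simp only [dif_pos (⟨h1, h2⟩ : x < d ∧ d ≤ y)]
  exact Classical.choose_spec (rim_exists hy hx hxy h1 h2)

lemma rimbox_step {φ : ℤ → ℕ × ℕ}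
    (hφ : ∀ d, x < d → d ≤ y → φ d ∈ Hset lam x y ∧ ((φ d).1 : ℤ) - (φ d).2 = d)
    {d : ℤ} (h1 : x < d) (h2 : d + 1 ≤ y) : Adj (φ d) (φ (d + 1)) := by
  obtain ⟨hH, hc⟩ := hφ d h1 (by omega)
  obtain ⟨hH', hc'⟩ := hφ (d + 1) (by omega) h2
  obtain ⟨hcell, hrim, hw1, hw2⟩ := hH
  rcases hq : φ d with ⟨a, b⟩
  rw [hq] at hc hcell hrim hw1 hw2
  simp only at hcell hrim hw1 hw2 hc
  by_cases hcase : ((a + 1, b) : ℕ × ℕ) ∈ lam.cells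
  · have hmem : ((a + 1, b) : ℕ × ℕ) ∈ Hset lam x y := by
      refine ⟨hcase, ?_, by push_cast; omega, by push_cast; omega⟩
      intro hc2
      exact hrim (cells_mono lam hc2 (by omega) le_rfl)
    have heq : ((a + 1, b) : ℕ × ℕ) = φ (d + 1) := by
      apply rim_unique hy hx hxy hmem hH'
      rw [hc']
      push_cast
      omega
    rw [← heq]
    right
    exact ⟨rfl, Or.inr rfl⟩
  · rcases Nat.eq_zero_or_pos b with hb0 | hbpos
    · exfalso
      subst hb0
      have hp0 : lam.parts 0 ≤ a + 1 := by
        by_contra hh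
        push_neg at hh
        exact hcase hh
      have h3 : (φ (d + 1)).1 < lam.parts (φ (d + 1)).2 := hH'.1
      have h4 := lam.antitone (Nat.zero_le (φ (d + 1)).2)
      omega
    · obtain ⟨b', rfl⟩ : ∃ b', b = b' + 1 := ⟨b - 1, by omega⟩
      have hcell2 : ((a, b') : ℕ × ℕ) ∈ lam.cells := cells_mono lam hcell le_rfl (by omega)
      have hmem : ((a, b') : ℕ × ℕ) ∈ Hset lam x y := by
        refine ⟨hcell2, ?_, by push_cast; omega, by push_cast; omega⟩
        intro hc2
        exact hcase hc2
      have heq : ((a, b') : ℕ × ℕ) = φ (d + 1) := by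
        apply rim_unique hy hx hxy hmem hH'
        rw [hc']
        push_cast
        omega
      rw [← heq]
      left
      exact ⟨rfl, Or.inl rfl⟩

lemma rimbox_chain {φ : ℤ → ℕ × ℕ}
    (hφ : ∀ d, x < d → d ≤ y → φ d ∈ Hset lam x y ∧ ((φ d).1 : ℤ) - (φ d).2 = d)
    (k : ℕ) : ∀ d : ℤ, x < d → d + k ≤ y →
    Relation.ReflTransGen
      (fun a b => a ∈ Hset lam x y ∧ b ∈ Hset lam x y ∧ Adj a b) (φ d) (φ (d + k)) := by
  induction k with
  | zero => intro d h1 h2; simpa using Relation.ReflTransGen.refl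
  | succ k ih =>
    intro d h1 h2
    have hstep : Adj (φ (d + k)) (φ (d + k + 1)) :=
      rimbox_step hy hx hxy hφ (by omega) (by push_cast at h2 ⊢; omega)
    have h3 : (d + (k : ℤ) + 1) = d + ((k : ℕ) + 1 : ℕ) := by push_cast; ring
    have htail : Relation.ReflTransGen _ (φ d) (φ (d + k)) := ih d h1 (by push_cast at h2 ⊢; omega)
    rw [← h3]
    exact htail.tail ⟨(hφ (d + k) (by omega) (by push_cast at h2 ⊢; omega)).1,
      (hφ (d + k + 1) (by omega) (by push_cast at h2 ⊢; omega)).1, hstep⟩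

lemma hset_isRimHook {l : ℕ} (hl : 1 ≤ l) (hly : y = x + l) :
    IsRimHook l lam (Hset lam x y) := by
  classical
  obtain ⟨φ, hφ⟩ := exists_rimbox_fun hy hx hxy
  have huniq : ∀ c ∈ Hset lam x y, c = φ ((c.1 : ℤ) - c.2) := by
    intro c hc
    have hw1 := hc.2.2.1
    have hw2 := hc.2.2.2
    exact rim_unique hy hx hxy hc (hφ _ hw1 hw2).1 (hφ _ hw1 hw2).2.symm
  have himage : Hset lam x y = φ '' Set.Ioc x y := by
    ext c
    constructor
    · intro hc
      exact ⟨(c.1 : ℤ) - c.2, ⟨hc.2.2.1, hc.2.2.2⟩, (huniq c hc).symm⟩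
    · rintro ⟨d, hd, rfl⟩
      exact (hφ d hd.1 hd.2).1
  have hinj : Set.InjOn φ (Set.Ioc x y) := by
    intro d1 h1 d2 h2 heq
    have e1 := (hφ d1 h1.1 h1.2).2
    have e2 := (hφ d2 h2.1 h2.2).2
    rw [heq] at e1
    omega
  have hfin : (Hset lam x y).Finite := by
    rw [himage]
    exact (Set.finite_Ioc x y).image φ
  have hcard : (Hset lam x y).ncard = l := by
    rw [himage, Set.ncard_image_of_injOn hinj, ← Finset.coe_Ioc, Set.ncard_coe_finset]
    rw [Int.card_Ioc]
    omega
  refine ⟨fun c hc => hc.1, hfin, hcard, ?_, ?_, ?_⟩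
  · -- connected
    intro p hp q hq
    have hp' := huniq p hp
    have hq' := huniq q hq
    set dp := (p.1 : ℤ) - p.2 with hdp
    set dq := (q.1 : ℤ) - q.2 with hdq
    have hwp : x < dp ∧ dp ≤ y := ⟨hp.2.2.1, hp.2.2.2⟩
    have hwq : x < dq ∧ dq ≤ y := ⟨hq.2.2.1, hq.2.2.2⟩
    rcases le_total dp dq with hle | hle
    · have := rimbox_chain hy hx hxy hφ (dq - dp).toNat dp hwp.1 (by omega)
      rw [show dp + ((dq - dp).toNat : ℤ) = dq by omega] at this
      rw [hp', hq']
      exact this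
    · have := rimbox_chain hy hx hxy hφ (dp - dq).toNat dq hwq.1 (by omega)
      rw [show dq + ((dp - dq).toNat : ℤ) = dp by omega] at this
      rw [hp', hq']
      have hsym : Symmetric (fun a b => a ∈ Hset lam x y ∧ b ∈ Hset lam x y ∧ Adj a b) := by
        rintro c c' ⟨h1, h2, h3⟩
        exact ⟨h2, h1, adj_symm h3⟩
      exact (@Relation.ReflTransGen.stdSymm _ _ ⟨fun _ _ h => hsym h⟩).symm _ _ this
  · -- no square
    rintro ⟨a, b, h1, _, _, h4⟩
    exact h1.2.1 h4.1
  · exact ⟨muPartition hy hx hxy, muPartition_cells hy hx hxy⟩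


end Part1

lemma core_step (lam : Partition') {l : ℕ} (hl : 1 ≤ l) (hcore : IsLCore l lam)
    (m : ℤ) (hm : ¬ lam.maya m) : ¬ lam.maya (m - l) := by
  intro hml
  have hxy : m - (l : ℤ) < m := by omega
  exact hcore ⟨Hset lam (m - l) m, hset_isRimHook hm hml hxy hl (by omega)⟩



lemma charge_step {μ : ℤ → Prop} {c : ℤ} (hch : IsCharge μ c)
    (hmono : ∀ k : ℤ, μ k → μ (k + 1)) : ∀ k : ℤ, μ k ↔ c ≤ k := by
  obtain ⟨hf1, hf2, heq⟩ := hch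
  have hmono' : ∀ k k' : ℤ, k ≤ k' → μ k → μ k' := by
    intro k k' hle hk
    obtain ⟨j, rfl⟩ : ∃ j : ℕ, k' = k + j := ⟨(k' - k).toNat, by omega⟩
    clear hle
    induction j with
    | zero => simpa using hk
    | succ j ih =>
      have hj := hmono (k + j) ih
      have : k + ((j : ℤ) + 1) = k + j + 1 := by ring
      push_cast
      rw [this]
      exact hj
  have h1 : ∀ k, k < c → ¬ μ k := by
    intro k hk hμ
    have hempty : {k : ℤ | c ≤ k ∧ ¬ μ k} = ∅ := by
      ext k'
      simp only [Set.mem_setOf_eq, Set.mem_empty_iff_false, iff_false, not_and, not_not]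
      intro hck'
      exact hmono' k k' (by omega) hμ
    rw [hempty] at heq
    simp only [Set.ncard_empty] at heq
    have h0 := (Set.ncard_eq_zero hf1).mp heq
    have : k ∈ {k : ℤ | k < c ∧ μ k} := ⟨hk, hμ⟩
    rw [h0] at this
    exact this
  have h2 : ∀ k, c ≤ k → μ k := by
    have hempty : {k : ℤ | k < c ∧ μ k} = ∅ := by
      ext k'
      simp only [Set.mem_setOf_eq, Set.mem_empty_iff_false, iff_false, not_and]
      exact fun hk' => h1 k' hk'
    rw [hempty] at heq
    simp only [Set.ncard_empty] at heq
    have h0 := (Set.ncard_eq_zero hf2).mp heq.symm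
    intro k hk
    by_contra hμ
    have : k ∈ {k : ℤ | c ≤ k ∧ ¬ μ k} := ⟨hk, hμ⟩
    rw [h0] at this
    exact this
  intro k
  constructor
  · intro hμ
    by_contra hc
    exact h1 k (by omega) hμ
  · exact h2 k



/-- Triangular number `1 + 2 + ⋯ + t` (zero for `t ≤ 0`). -/
def T (t : ℤ) : ℤ := (Finset.range t.toNat).sum (fun w => (w : ℤ) + 1)

lemma T_nonpos {t : ℤ} (ht : t ≤ 0) : T t = 0 := by
  unfold T
  have : t.toNat = 0 := by omega
  rw [this]
  simp

lemma T_step (t : ℤ) : T t = T (t - 1) + t.toNat := by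
  rcases le_or_gt t 0 with h | h
  · rw [T_nonpos h, T_nonpos (by omega)]
    omega
  · unfold T
    have h1 : t.toNat = (t - 1).toNat + 1 := by omega
    rw [h1, Finset.sum_range_succ]
    push_cast
    omega

lemma T_double {t : ℤ} (ht : 0 ≤ t) : 2 * T t = t * (t + 1) := by
  unfold T
  have h1 : ((Finset.range t.toNat).sum (fun w => (w:ℤ) + 1))
      = ((Finset.range t.toNat).sum (fun w => (w:ℤ))) + t.toNat := by
    rw [Finset.sum_add_distrib]
    simp
  have h2 : ((∑ i ∈ Finset.range t.toNat, i) * 2 : ℕ) = t.toNat * (t.toNat - 1) :=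
    Finset.sum_range_id_mul_two t.toNat
  have h3 : ((∑ i ∈ Finset.range t.toNat, i : ℕ) : ℤ)
      = ∑ w ∈ Finset.range t.toNat, (w : ℤ) := by push_cast; rfl
  rcases Nat.eq_zero_or_pos t.toNat with h0 | h0
  · have : t = 0 := by omega
    subst this
    simp
  · have h4 : (t.toNat : ℤ) * ((t.toNat : ℤ) - 1)
        = 2 * ∑ w ∈ Finset.range t.toNat, (w : ℤ) := by
      have := congrArg (fun x : ℕ => (x : ℤ)) h2
      push_cast [Nat.cast_sub (by omega : 1 ≤ t.toNat)] at this
      rw [← h3]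
      omega
    have ht' : (t.toNat : ℤ) = t := by omega
    rw [h1]
    rw [ht'] at h4 ⊢
    linear_combination -h4

lemma sum_toNat_range (M : ℕ) (c : ℤ) :
    ∑ w ∈ Finset.range M, (((c - w).toNat : ℤ)) = T c - T (c - M) := by
  induction M with
  | zero => simp
  | succ M ih =>
    rw [Finset.sum_range_succ, ih]
    have := T_step (c - M)
    push_cast
    have harg : c - ((M : ℤ) + 1) = c - M - 1 := by ring
    rw [harg]
    omega

lemma class_eq {l : ℕ} (hl : 0 < l) {i j s s' : ℤ} (hi : 0 ≤ i) (hi' : i < l)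
    (hj : 0 ≤ j) (hj' : j < l) (h : (l : ℤ) * s + i = (l : ℤ) * s' + j) :
    s = s' ∧ i = j := by
  have h1 : i % l = i := Int.emod_eq_of_lt hi hi'
  have h2 : j % l = j := Int.emod_eq_of_lt hj hj'
  have h3 : (i + s * l) % l = (j + s' * l) % l := by
    rw [show i + s * l = (l:ℤ) * s + i by ring, show j + s' * l = (l:ℤ) * s' + j by ring, h]
  rw [Int.add_mul_emod_self_right, Int.add_mul_emod_self_right, h1, h2] at h3
  subst h3
  constructor
  · have : (l : ℤ) * s = (l : ℤ) * s' := by omega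
    exact mul_left_cancel₀ (by positivity) this
  · rfl

lemma lmul_mono {l : ℕ} {s t : ℤ} (h : s ≤ t) : (l : ℤ) * s ≤ (l : ℤ) * t :=
  mul_le_mul_of_nonneg_left h (by positivity)

section Part3

lemma hbead (l : ℕ) (hl : 2 ≤ l) (lam : Partition') (P : ℤ) (tp : Fin l → ℤ)
    (hmaya : ∀ (i : Fin l) (k : ℤ), lam.maya ((l : ℤ) * k + (i : ℕ) - P) ↔ tp i ≤ k) :
    ∀ m : ℤ, ¬ lam.maya m ↔
      ∃ i : Fin l, ∃ s : ℤ, m = (l : ℤ) * s + (i : ℕ) - P ∧ s < tp i := by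
  intro m
  constructor
  · intro hm
    have hl0 : (0 : ℤ) < l := by exact_mod_cast (by omega : 0 < l)
    set i0 : ℤ := (m + P) % l with hi0
    have hb1 : 0 ≤ i0 := Int.emod_nonneg _ (by omega)
    have hb2 : i0 < l := Int.emod_lt_of_pos _ hl0
    set s : ℤ := (m + P) / l with hs
    have hdiv : (l : ℤ) * s + i0 = m + P := Int.mul_ediv_add_emod (m + P) l
    set i : Fin l := ⟨i0.toNat, by omega⟩ with hi
    have hival : ((i : ℕ) : ℤ) = i0 := by
      simp only [hi]
      omega
    have hmeq : m = (l : ℤ) * s + (i : ℕ) - P := by omega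
    refine ⟨i, s, hmeq, ?_⟩
    by_contra hge
    push_neg at hge
    exact hm (hmeq ▸ (hmaya i s).mpr hge)
  · rintro ⟨i, s, rfl, hs⟩
    intro hmaya'
    exact absurd ((hmaya i s).mp hmaya') (by omega)

lemma Fc_decomp (l : ℕ) (hl : 2 ≤ l) (lam : Partition') (n : ℤ) (r : ℕ) (hr : r < l)
    (P : ℤ) (hP : P = n * l + r) (tp : Fin l → ℤ)
    (hmaya : ∀ (i : Fin l) (k : ℤ), lam.maya ((l : ℤ) * k + (i : ℕ) - P) ↔ tp i ≤ k)
    (u : ℤ) :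
    Fc lam ((l : ℤ) * u - r) = ∑ i : Fin l, (tp i - n - u).toNat := by
  classical
  have hb := hbead l hl lam P tp hmaya
  set S : Fin l → Finset ℤ :=
    fun i => (Finset.Ico (u + n) (tp i)).image (fun s => (l : ℤ) * s + (i : ℕ) - P) with hS
  have hln : (l : ℤ) * n = n * l := by ring
  have hset : {k : ℤ | (l : ℤ) * u - r ≤ k ∧ ¬ lam.maya k} = ↑(Finset.univ.biUnion S) := by
    ext k
    constructor
    · rintro ⟨hk, hnm⟩
      obtain ⟨i, s, rfl, hsu⟩ := (hb _).mp hnm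
      have hmem : (l : ℤ) * s + (i : ℕ) - P ∈ S i := by
        rw [hS]
        simp only [Finset.mem_image, Finset.mem_Ico]
        refine ⟨s, ⟨?_, hsu⟩, rfl⟩
        by_contra hlt
        push_neg at hlt
        have h2 := lmul_mono (l := l) (show s ≤ u + n - 1 by omega)
        have h3 : (l : ℤ) * (u + n - 1) = l * u + l * n - l := by ring
        have hi : ((i : ℕ) : ℤ) < l := by exact_mod_cast i.isLt
        omega
      exact Finset.mem_coe.mpr (Finset.mem_biUnion.mpr ⟨i, Finset.mem_univ i, hmem⟩)
    · intro hk
      obtain ⟨i, -, hmem⟩ := Finset.mem_biUnion.mp (Finset.mem_coe.mp hk)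
      rw [hS] at hmem
      simp only [Finset.mem_image, Finset.mem_Ico] at hmem
      obtain ⟨s, ⟨hs1, hs2⟩, rfl⟩ := hmem
      constructor
      · have h2 := lmul_mono (l := l) hs1
        have h3 : (l : ℤ) * (u + n) = l * u + l * n := by ring
        have hi : (0 : ℤ) ≤ ((i : ℕ) : ℤ) := by positivity
        omega
      · rw [hb]
        exact ⟨i, s, rfl, hs2⟩
  have hcard : Fc lam ((l : ℤ) * u - r) = (Finset.univ.biUnion S).card := by
    rw [Fc, hset, Set.ncard_coe_finset]
  rw [hcard, Finset.card_biUnion]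
  · apply Finset.sum_congr rfl
    intro i _
    rw [hS]
    simp only
    rw [Finset.card_image_of_injective _ (fun s s' he => by
      have h1 : (l : ℤ) * s = l * s' := by omega
      exact mul_left_cancel₀ (show (l:ℤ) ≠ 0 by positivity) h1)]
    rw [Int.card_Ico]
    omega
  · intro i _ j _ hij
    simp only [Finset.disjoint_left, hS, Finset.mem_image, Finset.mem_Ico]
    rintro k ⟨s, _, rfl⟩ ⟨s', _, he⟩
    have hi1 : (0:ℤ) ≤ ((i : ℕ) : ℤ) := by positivity
    have hi2 : ((i : ℕ) : ℤ) < l := by exact_mod_cast i.isLt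
    have hj1 : (0:ℤ) ≤ ((j : ℕ) : ℤ) := by positivity
    have hj2 : ((j : ℕ) : ℤ) < l := by exact_mod_cast j.isLt
    have heq : (l : ℤ) * s' + (j : ℕ) = (l : ℤ) * s + (i : ℕ) := by omega
    obtain ⟨-, hij'⟩ := class_eq (show 0 < l by omega) hj1 hj2 hi1 hi2 heq
    apply hij
    have : ((i : ℕ) : ℤ) = ((j : ℕ) : ℤ) := hij'.symm
    have : (i : ℕ) = (j : ℕ) := by exact_mod_cast this
    exact (Fin.ext this).symm ▸ rfl

lemma sum_tp (l : ℕ) (hl : 2 ≤ l) (lam : Partition') (n : ℤ) (r : ℕ) (hr : r < l)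
    (P : ℤ) (hP : P = n * l + r) (tp : Fin l → ℤ)
    (hmaya : ∀ (i : Fin l) (k : ℤ), lam.maya ((l : ℤ) * k + (i : ℕ) - P) ↔ tp i ≤ k) :
    ∑ i : Fin l, tp i = P := by
  obtain ⟨N, hN⟩ := lam.eventually_zero
  have hFneg : ∀ d : ℤ, d ≤ -(N : ℤ) → (Fc lam d : ℤ) = -d := by
    intro d hd
    have h1 : {b : ℕ | d ≤ beta lam b} = Set.Iio ((-d).toNat) := by
      ext b
      simp only [Set.mem_setOf_eq, Set.mem_Iio]
      constructor
      · intro hb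
        by_contra hge
        push_neg at hge
        have hb' : N ≤ b := by omega
        have h0 := hN b hb'
        rw [beta, h0] at hb
        push_cast at hb
        omega
      · intro hb
        rw [beta]
        have : (0 : ℤ) ≤ lam.parts b := by positivity
        omega
    have h2 := betaSet_eq_Iio lam d
    rw [h1] at h2
    have h3 := Set.ext_iff.mp h2
    have e1 := h3 (Fc lam d)
    have e2 := h3 ((-d).toNat)
    simp only [Set.mem_Iio] at e1 e2
    omega
  haveI : Nonempty (Fin l) := ⟨⟨0, by omega⟩⟩
  set u1 : ℤ := (Finset.univ.inf' Finset.univ_nonempty (fun i => tp i - n)) ⊓ 0 ⊓ (-(N : ℤ))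
    with hu1
  have hu1le : ∀ i : Fin l, u1 ≤ tp i - n := by
    intro i
    calc u1 ≤ Finset.univ.inf' Finset.univ_nonempty (fun i => tp i - n) := by
          rw [hu1]; exact le_trans inf_le_left inf_le_left
      _ ≤ tp i - n := Finset.inf'_le _ (Finset.mem_univ i)
  have hu1N : u1 ≤ -(N : ℤ) := by rw [hu1]; exact inf_le_right
  have hu10 : u1 ≤ 0 := by rw [hu1]; exact le_trans inf_le_left inf_le_right
  have hlow : (l : ℤ) * u1 - r ≤ -(N : ℤ) := by
    have h1 := lmul_mono (l := l) hu1N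
    have h2 : (l : ℤ) * (-(N:ℤ)) = -((l : ℤ) * N) := by ring
    have h3 : (N : ℤ) ≤ (l : ℤ) * N := by
      have := mul_le_mul_of_nonneg_right (show (1:ℤ) ≤ l by omega)
        (show (0:ℤ) ≤ N by positivity)
      omega
    omega
  have hdec := Fc_decomp l hl lam n r hr P hP tp hmaya u1
  have hneg := hFneg _ hlow
  have hcast : ((∑ i : Fin l, (tp i - n - u1).toNat : ℕ) : ℤ)
      = ∑ i : Fin l, (tp i - n - u1) := by
    push_cast
    apply Finset.sum_congr rfl
    intro i _
    have := hu1le i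
    omega
  have hsum : ∑ i : Fin l, (tp i - n - u1) = (∑ i : Fin l, tp i) - l * (n + u1) := by
    have he : ∀ i : Fin l, tp i - n - u1 = tp i - (n + u1) := fun i => by ring
    simp_rw [he]
    rw [Finset.sum_sub_distrib, Finset.sum_const, Finset.card_univ, Fintype.card_fin]
    push_cast
    ring
  have : (Fc lam ((l : ℤ) * u1 - r) : ℤ) = (∑ i : Fin l, tp i) - l * (n + u1) := by
    rw [hdec, hcast, hsum]
  rw [hneg] at this
  rw [hP]
  linear_combination -this

end Part3
section Master

lemma master (l : ℕ) (hl : 2 ≤ l) (lam : Partition') (n : ℤ) (r : ℕ) (hr : r < l)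
    (P : ℤ) (hP : P = n * l + r) (tp : Fin l → ℤ)
    (hmaya : ∀ (i : Fin l) (k : ℤ), lam.maya ((l : ℤ) * k + (i : ℕ) - P) ↔ tp i ≤ k) :
    ({c : ℕ × ℕ | c ∈ lam.cells ∧ ((c.1 : ℤ) - (c.2 : ℤ)) ≡ -(r : ℤ) [ZMOD (l : ℤ)]}.ncard : ℤ)
        * 2 = (∑ i, (tp i - n) ^ 2) - (r : ℤ) := by
  classical
  have hl0 : (0 : ℤ) < l := by exact_mod_cast (by omega : 0 < l)
  have hsumtp := sum_tp l hl lam n r hr P hP tp hmaya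
  haveI : Nonempty (Fin l) := ⟨⟨0, by omega⟩⟩
  obtain ⟨N, hN⟩ := lam.eventually_zero
  set A : ℤ := (Finset.univ.inf' Finset.univ_nonempty (fun i => tp i - n)) ⊓ 0 with hA
  set B : ℤ := (Finset.univ.sup' Finset.univ_nonempty (fun i => tp i - n)) ⊔ 0 with hB
  have hAle : ∀ i : Fin l, A ≤ tp i - n := fun i =>
    le_trans inf_le_left (Finset.inf'_le _ (Finset.mem_univ i))
  have hBge : ∀ i : Fin l, tp i - n ≤ B := fun i =>
    le_trans (Finset.le_sup' (fun i => tp i - n) (Finset.mem_univ i)) le_sup_left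
  have hA0 : A ≤ 0 := inf_le_right
  have hB0 : 0 ≤ B := le_sup_right
  have hdec := fun u => Fc_decomp l hl lam n r hr P hP tp hmaya u
  have hdecZ : ∀ u : ℤ, ((Fc lam ((l : ℤ) * u - r) : ℕ) : ℤ)
      = ∑ i : Fin l, ((tp i - n - u).toNat : ℤ) := by
    intro u
    rw [hdec u]
    push_cast
    rfl
  have hsum_lin : ∀ u : ℤ, ∑ i : Fin l, (tp i - n - u) = (r : ℤ) - l * u := by
    intro u
    have he : ∀ i : Fin l, tp i - n - u = tp i - (n + u) := fun i => by ring
    simp_rw [he]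
    rw [Finset.sum_sub_distrib, Finset.sum_const, Finset.card_univ, Fintype.card_fin, hsumtp]
    rw [hP]
    push_cast [nsmul_eq_mul]
    ring
  have hFlow : ∀ u : ℤ, u ≤ A → ((Fc lam ((l : ℤ) * u - r) : ℕ) : ℤ) = (r : ℤ) - l * u := by
    intro u hu
    rw [hdecZ u]
    have h2 : ∀ i ∈ Finset.univ, ((tp i - n - u).toNat : ℤ) = tp i - n - u := by
      intro i _
      have := hAle i
      omega
    rw [Finset.sum_congr rfl h2, hsum_lin]
  have hFhigh : ∀ u : ℤ, B < u → Fc lam ((l : ℤ) * u - r) = 0 := by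
    intro u hu
    rw [hdec u]
    apply Finset.sum_eq_zero
    intro i _
    have := hBge i
    omega
  have hm0le : ∀ u : ℤ, ((r : ℤ) - l * u).toNat ≤ Fc lam ((l : ℤ) * u - r) := by
    intro u
    have h3 : ∑ i : Fin l, (tp i - n - u) ≤ ∑ i : Fin l, ((tp i - n - u).toNat : ℤ) :=
      Finset.sum_le_sum (fun i _ => Int.self_le_toNat _)
    have h4 := hsum_lin u
    have h5 := hdecZ u
    omega
  -- the finset of boxes
  set E : Finset (ℕ × ℕ) := ((Finset.range (lam.parts 0)) ×ˢ (Finset.range N)).filter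
    (fun c => c.1 < lam.parts c.2 ∧ ((c.1 : ℤ) - c.2 + r) % l = 0) with hE
  have hEmem : ∀ a b : ℕ, ((a, b) ∈ E) ↔ (a < lam.parts b ∧ ((a : ℤ) - b + r) % l = 0) := by
    intro a b
    rw [hE]
    simp only [Finset.mem_filter, Finset.mem_product, Finset.mem_range]
    constructor
    · tauto
    · rintro ⟨h1, h2⟩
      refine ⟨⟨?_, ?_⟩, h1, h2⟩
      · exact lt_of_lt_of_le h1 (lam.antitone (Nat.zero_le b))
      · by_contra hbN
        push_neg at hbN
        have := hN b hbN
        omega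
  have hEset : {c : ℕ × ℕ | c ∈ lam.cells ∧ ((c.1 : ℤ) - (c.2 : ℤ)) ≡ -(r : ℤ) [ZMOD (l : ℤ)]}
      = ↑E := by
    ext ⟨a, b⟩
    simp only [Set.mem_setOf_eq, Finset.mem_coe, hEmem]
    have hmod : (((a : ℤ) - (b : ℤ)) ≡ -(r : ℤ) [ZMOD (l : ℤ)]) ↔ ((a : ℤ) - b + r) % l = 0 := by
      rw [Int.modEq_iff_dvd]
      constructor
      · intro h
        apply Int.emod_eq_zero_of_dvd
        have h2 := dvd_neg.mpr h
        have h3 : -(-(r : ℤ) - ((a : ℤ) - b)) = (a : ℤ) - b + r := by ring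
        rwa [h3] at h2
      · intro h
        have h2 := Int.dvd_of_emod_eq_zero h
        have h3 : (-(r : ℤ) - ((a : ℤ) - b)) = -((a : ℤ) - b + (r : ℤ)) := by ring
        rw [h3]
        exact dvd_neg.mpr h2
    rw [hmod]
    exact Iff.rfl
  -- fiber map
  obtain ⟨f, hfval⟩ : ∃ f : ℕ × ℕ → ℤ, ∀ a b : ℕ, ((a : ℤ) - b + r) % l = 0 →
      (a : ℤ) - b = (l : ℤ) * f (a, b) - r := by
    refine ⟨fun c => ((c.1 : ℤ) - c.2 + r) / l, ?_⟩
    intro a b h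
    have h1 := Int.mul_ediv_add_emod ((a : ℤ) - b + r) l
    rw [h] at h1
    simp only
    omega
  set M : ℕ := (B - A + 1).toNat with hM
  set UF : Finset ℤ := (Finset.range M).image (fun w : ℕ => A + (w : ℤ)) with hUF
  have hUFmem : ∀ u : ℤ, u ∈ UF ↔ (A ≤ u ∧ u ≤ B) := by
    intro u
    rw [hUF]
    simp only [Finset.mem_image, Finset.mem_range]
    constructor
    · rintro ⟨w, hw, rfl⟩
      omega
    · rintro ⟨h1, h2⟩
      exact ⟨(u - A).toNat, by omega, by omega⟩
  have hfE : ∀ c ∈ E, f c ∈ UF := by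
    rintro ⟨a, b⟩ hc
    rw [hEmem] at hc
    obtain ⟨hcell, hmod⟩ := hc
    have hd := hfval a b hmod
    have hFcb : b < Fc lam ((a : ℤ) - b) :=
      (cells_iff_Fc lam a b).mp (by exact hcell)
    rw [hd] at hFcb
    rw [hUFmem]
    constructor
    · by_contra hlt
      push_neg at hlt
      have h1 := hFlow (f (a, b)) (by omega)
      omega
    · by_contra hgt
      push_neg at hgt
      have h1 := hFhigh (f (a, b)) hgt
      omega
  have hcount : E.card = ∑ u ∈ UF, (E.filter (fun c => f c = u)).card :=
    Finset.card_eq_sum_card_fiberwise hfE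
  -- fiber cardinalities
  have hfiber : ∀ u : ℤ, (E.filter (fun c => f c = u)).card
      = Fc lam ((l : ℤ) * u - r) - ((r : ℤ) - l * u).toNat := by
    intro u
    have himg : E.filter (fun c => f c = u)
        = (Finset.Ico (((r : ℤ) - l * u).toNat) (Fc lam ((l : ℤ) * u - r))).image
            (fun b : ℕ => ((((b : ℤ) + l * u - r).toNat), b)) := by
      ext ⟨a, b⟩
      simp only [Finset.mem_filter, Finset.mem_image, Finset.mem_Ico]
      constructor
      · rintro ⟨hcE, hfu⟩
        rw [hEmem] at hcE
        obtain ⟨hcell, hmod⟩ := hcE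
        have hd := hfval a b hmod
        rw [hfu] at hd
        have hFcb : b < Fc lam ((a : ℤ) - b) := (cells_iff_Fc lam a b).mp (by exact hcell)
        rw [hd] at hFcb
        refine ⟨b, ⟨by omega, hFcb⟩, ?_⟩
        have ha : ((b : ℤ) + l * u - r).toNat = a := by omega
        rw [ha]
      · rintro ⟨b', ⟨hb1, hb2⟩, heq⟩
        have hb'b : b' = b := congrArg Prod.snd heq
        subst hb'b
        have ha : (((b' : ℤ) + l * u - r).toNat) = a := congrArg Prod.fst heq
        have hb1' : ((r : ℤ) - l * u) ≤ (b' : ℤ) := by omega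
        have haZ : (a : ℤ) = (b' : ℤ) + l * u - r := by omega
        have hcell : ((a, b') : ℕ × ℕ) ∈ lam.cells := by
          rw [cells_iff_Fc, show (a : ℤ) - b' = l * u - r by omega]
          exact hb2
        have hmod : ((a : ℤ) - b' + r) % l = 0 := by
          rw [show (a : ℤ) - b' + r = l * u by omega]
          exact Int.mul_emod_right _ _
        refine ⟨(hEmem a b').mpr ⟨hcell, hmod⟩, ?_⟩
        have hd := hfval a b' hmod
        have hlf : (l : ℤ) * f (a, b') = l * u := by omega
        exact mul_left_cancel₀ (show (l : ℤ) ≠ 0 by positivity) hlf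
    rw [himg, Finset.card_image_of_injective _ (fun b₁ b₂ h => congrArg Prod.snd h),
      Nat.card_Ico]
  -- cast counting to ℤ
  have hcountZ : (E.card : ℤ) = ∑ u ∈ UF,
      (((Fc lam ((l : ℤ) * u - r) : ℕ) : ℤ) - ((((r : ℤ) - l * u).toNat : ℕ) : ℤ)) := by
    rw [hcount, Nat.cast_sum]
    apply Finset.sum_congr rfl
    intro u _
    rw [hfiber u]
    have h1 := hm0le u
    omega
  have hUFsum : ∀ g : ℤ → ℤ, ∑ u ∈ UF, g u = ∑ w ∈ Finset.range M, g (A + w) := by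
    intro g
    rw [hUF]
    apply Finset.sum_image
    intro x _ y _ h
    have h' : A + (x : ℤ) = A + y := h
    omega
  rw [hUFsum] at hcountZ
  have hsplit : (E.card : ℤ) =
      (∑ w ∈ Finset.range M, ∑ i : Fin l, ((tp i - n - (A + w)).toNat : ℤ))
      - ∑ w ∈ Finset.range M, (((r : ℤ) - l * (A + w)).toNat : ℤ) := by
    rw [hcountZ, ← Finset.sum_sub_distrib]
    apply Finset.sum_congr rfl
    intro w _
    rw [hdecZ (A + w)]
  have hswap : (∑ w ∈ Finset.range M, ∑ i : Fin l, ((tp i - n - (A + w)).toNat : ℤ))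
      = ∑ i : Fin l, ∑ w ∈ Finset.range M, ((tp i - n - (A + w)).toNat : ℤ) :=
    Finset.sum_comm
  have hTi : ∀ i : Fin l, ∑ w ∈ Finset.range M, ((tp i - n - (A + w)).toNat : ℤ)
      = T (tp i - n - A) := by
    intro i
    have he : ∀ w : ℕ, tp i - n - (A + (w : ℤ)) = (tp i - n - A) - w := fun w => by ring
    simp_rw [he]
    rw [sum_toNat_range M (tp i - n - A)]
    rw [T_nonpos (show tp i - n - A - M ≤ 0 by have := hBge i; omega)]
    ring
  set K : ℕ := (1 - A).toNat with hK
  have hKM : K ≤ M := by omega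
  have hrpart : ∑ w ∈ Finset.range M, (((r : ℤ) - l * (A + w)).toNat : ℤ)
      = ∑ w ∈ Finset.range K, ((r : ℤ) - l * (A + w)) := by
    rw [← Finset.sum_subset (Finset.range_subset_range.mpr hKM)]
    · apply Finset.sum_congr rfl
      intro w hw
      simp only [Finset.mem_range] at hw
      have hw0 : A + (w : ℤ) ≤ 0 := by omega
      have h2 := lmul_mono (l := l) hw0
      have h0 : (l : ℤ) * 0 = 0 := by ring
      omega
    · intro w hwM hwK
      simp only [Finset.mem_range, not_lt] at hwK
      have hw1 : (1 : ℤ) ≤ A + w := by omega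
      have h2 := lmul_mono (l := l) hw1
      have h1 : (l : ℤ) * 1 = l := by ring
      omega
  have hlin : ∑ w ∈ Finset.range K, ((r : ℤ) - l * (A + w))
      = (K : ℤ) * ((r : ℤ) - l * A) - l * (∑ w ∈ Finset.range K, (w : ℤ)) := by
    have he : ∀ w : ℕ, (r : ℤ) - l * (A + (w : ℤ)) = ((r : ℤ) - l * A) - l * w :=
      fun w => by ring
    simp_rw [he]
    rw [Finset.sum_sub_distrib, Finset.sum_const, Finset.card_range, ← Finset.mul_sum]
    push_cast [nsmul_eq_mul]
    ring
  have hSW : 2 * (∑ w ∈ Finset.range K, (w : ℤ)) = (K : ℤ) * ((K : ℤ) - 1) := by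
    rcases Nat.eq_zero_or_pos K with h0 | h0
    · rw [h0]; simp
    · have h2 := Finset.sum_range_id_mul_two K
      have h3 := congrArg (fun x : ℕ => (x : ℤ)) h2
      push_cast [Nat.cast_sub (show 1 ≤ K by omega)] at h3
      linear_combination h3
  have hsm : ∑ i : Fin l, (tp i - n) = (r : ℤ) := by
    have h1 := hsum_lin 0
    simp only [sub_zero, mul_zero] at h1
    simpa using h1
  have hTdouble : ∀ i ∈ Finset.univ, 2 * T (tp i - n - A)
      = (tp i - n) ^ 2 + (1 - 2 * A) * (tp i - n) + (A ^ 2 - A) := by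
    intro i _
    rw [T_double (show (0:ℤ) ≤ tp i - n - A by have := hAle i; omega)]
    ring
  have hfin : ∑ i : Fin l, 2 * T (tp i - n - A)
      = (∑ i : Fin l, (tp i - n) ^ 2) + (1 - 2 * A) * (r : ℤ) + (l : ℤ) * (A ^ 2 - A) := by
    rw [Finset.sum_congr rfl hTdouble, Finset.sum_add_distrib, Finset.sum_add_distrib,
      ← Finset.mul_sum, hsm, Finset.sum_const, Finset.card_univ, Fintype.card_fin]
    push_cast [nsmul_eq_mul]
    ring
  have hsplitfinal : (E.card : ℤ) = (∑ i : Fin l, T (tp i - n - A))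
      - ((K : ℤ) * ((r : ℤ) - l * A) - l * ∑ w ∈ Finset.range K, (w : ℤ)) := by
    rw [hsplit, hswap, Finset.sum_congr rfl (fun i _ => hTi i), hrpart, hlin]
  have hKZ : (K : ℤ) = 1 - A := by omega
  have hcard2 : (E.card : ℤ) * 2 = (∑ i : Fin l, 2 * T (tp i - n - A))
      - 2 * ((K : ℤ) * ((r : ℤ) - l * A))
      + (l : ℤ) * (2 * ∑ w ∈ Finset.range K, (w : ℤ)) := by
    have h2T : ∑ i : Fin l, 2 * T (tp i - n - A) = 2 * ∑ i : Fin l, T (tp i - n - A) :=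
      (Finset.mul_sum _ _ _).symm
    rw [hsplitfinal, h2T]
    ring
  rw [hEset, Set.ncard_coe_finset, hcard2, hfin, hSW, hKZ]
  ring

end Master

end S8

/-- Let `l ≥ 2`, let `λ` be an `l`-core, let `p = nl + r` with
`0 ≤ r ≤ l−1`, and let `p̃_i` be the charges of the sequences `k ↦ μ_λ(lk + i − p)` (the
quotient charges of the Maya diagram of `λ` shifted by `p`). Then
`∑_{k∈ℤ} N_{kl−r}(λ) = (1/l)·((l/2)·∑_i p̃_i² − (l+1)p/2 − p²/2 + (l+1)ln/2 + (r+1)r/2)`,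
where the left-hand side is the number of boxes of `λ` of content `≡ −r (mod l)`. -/
theorem lcore_shifted_content_formula (l : ℕ) (hl : 2 ≤ l) (lam : Partition')
    (hcore : IsLCore l lam) (n : ℤ) (r : ℕ) (hr : r < l) (P : ℤ) (hP : P = n * l + r)
    (tp : Fin l → ℤ)
    (htp : ∀ i : Fin l, IsCharge (fun k => lam.maya ((l : ℤ) * k + (i : ℕ) - P)) (tp i)) :
    (contentCount l lam (-(r : ℤ)) : ℚ) =
      (1 / (l : ℚ)) * (((l : ℚ) / 2) * ∑ i, (tp i : ℚ) ^ 2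
        - (((l : ℚ) + 1) * (P : ℚ)) / 2 - (P : ℚ) ^ 2 / 2
        + (((l : ℚ) + 1) * (l : ℚ) * (n : ℚ)) / 2 + (((r : ℚ) + 1) * (r : ℚ)) / 2) := by
  classical
  have hl1 : 1 ≤ l := by omega
  have hmaya : ∀ (i : Fin l) (k : ℤ), lam.maya ((l : ℤ) * k + (i : ℕ) - P) ↔ tp i ≤ k := by
    intro i
    apply S8.charge_step (htp i)
    intro k hk
    by_contra h2
    have h3 := S8.core_step lam hl1 hcore ((l : ℤ) * (k + 1) + (i : ℕ) - P) h2
    rw [show (l : ℤ) * (k + 1) + (i : ℕ) - P - l = (l : ℤ) * k + (i : ℕ) - P by ring] at h3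
    exact h3 hk
  have hsumtp := S8.sum_tp l hl lam n r hr P hP tp hmaya
  have hcnt := S8.master l hl lam n r hr P hP tp hmaya
  have hcnt' : (contentCount l lam (-(r : ℤ)) : ℤ) * 2
      = (∑ i, (tp i - n) ^ 2) - (r : ℤ) := by
    rw [contentCount]
    exact hcnt
  have hQ : (contentCount l lam (-(r : ℤ)) : ℚ) * 2
      = (∑ i, ((tp i : ℚ) - (n : ℚ)) ^ 2) - (r : ℚ) := by
    exact_mod_cast hcnt'
  have hsumQ : (∑ i, (tp i : ℚ)) = (P : ℚ) := by exact_mod_cast hsumtp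
  have hexp : (∑ i, ((tp i : ℚ) - (n : ℚ)) ^ 2)
      = (∑ i, (tp i : ℚ) ^ 2) - 2 * (n : ℚ) * (P : ℚ) + (l : ℚ) * (n : ℚ) ^ 2 := by
    have he : ∀ i ∈ Finset.univ, ((tp i : ℚ) - (n : ℚ)) ^ 2
        = ((tp i : ℚ) ^ 2 - (2 * (n : ℚ)) * (tp i : ℚ)) + (n : ℚ) ^ 2 := fun i _ => by ring
    rw [Finset.sum_congr rfl he, Finset.sum_add_distrib, Finset.sum_sub_distrib,
      ← Finset.mul_sum, hsumQ, Finset.sum_const, Finset.card_univ, Fintype.card_fin]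
    push_cast [nsmul_eq_mul]
    ring
  rw [hexp] at hQ
  have hPQ : (P : ℚ) = (n : ℚ) * (l : ℚ) + (r : ℚ) := by
    rw [hP]
    push_cast
    ring
  have hl0 : (l : ℚ) ≠ 0 := by
    have : (0 : ℚ) < l := by exact_mod_cast (by omega : 0 < l)
    exact ne_of_gt this
  have key : (contentCount l lam (-(r : ℤ)) : ℚ) * (2 * (l : ℚ))
      = (l : ℚ) * (∑ i, (tp i : ℚ) ^ 2) - ((l : ℚ) + 1) * (P : ℚ) - (P : ℚ) ^ 2
        + ((l : ℚ) + 1) * (l : ℚ) * (n : ℚ) + ((r : ℚ) + 1) * (r : ℚ) := by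
    linear_combination (l : ℚ) * hQ + ((P : ℚ) + (l : ℚ) + 1 - (l : ℚ) * (n : ℚ) + (r : ℚ)) * hPQ
  have h2l : (2 * (l : ℚ)) ≠ 0 := by
    intro h
    apply hl0
    have : (l : ℚ) = 0 ∨ (2 : ℚ) = 0 := by
      rcases mul_eq_zero.mp h with h1 | h1
      · right; exact h1
      · left; exact h1
    rcases this with h1 | h1
    · exact h1
    · norm_num at h1
  apply mul_left_cancel₀ h2l
  rw [show (2 * (l : ℚ)) * (contentCount l lam (-(r : ℤ)) : ℚ)
      = (contentCount l lam (-(r : ℤ)) : ℚ) * (2 * (l : ℚ)) by ring, key]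
  field_simp
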